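/- Let a, b ∈ ℝ³. Then (1/2)‖a‖²‖b‖² ≤ ‖dev sym(Anti(a) × b)‖² ≤ (2/3)‖a‖²‖b‖². (In fact the proof shows ‖dev sym(Anti(a) × b)‖² = (1/2)‖a‖²‖b‖² + (1/6)⟨a,b⟩².) -/

import Mathlib

open Matrix MeasureTheory

noncomputable section

abbrev M3 := Matrix (Fin 3) (Fin 3) ℝ
abbrev V3 := Fin 3 → ℝ

def sym3 (X : M3) : M3 := (1/2 : ℝ) • (X + Xᵀ)
def dev3 (X : M3) : M3 := X - ((1/3 : ℝ) * Matrix.trace X) • (1 : M3)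
def Anti3 (a : V3) : M3 := !![0, -a 2, a 1; a 2, 0, -a 0; -a 1, a 0, 0]
def frobSq (X : M3) : ℝ := ∑ i, ∑ j, (X i j)^2
def frobNorm (X : M3) : ℝ := Real.sqrt (frobSq X)
def vnormSq (a : V3) : ℝ := ∑ i, (a i)^2

def pd (k : Fin 3) (f : V3 → ℝ) (x : V3) : ℝ := fderiv ℝ f x (Pi.single k 1)

def Curl3 (P : V3 → M3) (x : V3) : M3 :=
  Matrix.of fun i j =>
    ![pd 1 (fun y => P y i 2) x - pd 2 (fun y => P y i 1) x,
      pd 2 (fun y => P y i 0) x - pd 0 (fun y => P y i 2) x,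
      pd 0 (fun y => P y i 1) x - pd 1 (fun y => P y i 0) x] j

def Jac3 (u : V3 → V3) (x : V3) : M3 :=
  Matrix.of fun i j => pd j (fun y => u y i) x

def lpM (q : ℝ) (Q : V3 → M3) : ℝ := (∫ x : V3, frobNorm (Q x) ^ q) ^ (1/q)
def lpV (q : ℝ) (a : V3 → V3) : ℝ := (∫ x : V3, Real.sqrt (vnormSq (a x)) ^ q) ^ (1/q)

/-- For a, b ∈ ℝ³,
(1/2)‖a‖²‖b‖² ≤ ‖dev sym(Anti(a) × b)‖² ≤ (2/3)‖a‖²‖b‖²,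
where P × b := P · Anti(b) and ‖·‖ is the Frobenius norm. -/
theorem stmt0 (a b : V3) :
    (1/2) * vnormSq a * vnormSq b ≤ frobSq (dev3 (sym3 (Anti3 a * Anti3 b))) ∧
    frobSq (dev3 (sym3 (Anti3 a * Anti3 b))) ≤ (2/3) * vnormSq a * vnormSq b := by
  have key : frobSq (dev3 (sym3 (Anti3 a * Anti3 b))) =
      (1/2) * vnormSq a * vnormSq b + (1/6) * (a 0 * b 0 + a 1 * b 1 + a 2 * b 2)^2 := by
    simp only [frobSq, dev3, sym3, Anti3, vnormSq, Matrix.trace, Fin.sum_univ_three,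
      Matrix.diag, Matrix.sub_apply, Matrix.smul_apply, Matrix.add_apply,
      Matrix.transpose_apply, Matrix.mul_apply, Matrix.one_apply, smul_eq_mul]
    norm_num [Matrix.cons_val_zero, Matrix.cons_val_one, Matrix.head_cons,
      Matrix.cons_val_fin_one, Matrix.head_fin_const, Matrix.cons_val_two, Matrix.tail_cons]
    simp only [Fin.isValue, show ((0:Fin 3) = 2) = False by simp [Fin.ext_iff],
      show ((2:Fin 3) = 0) = False by simp [Fin.ext_iff],
      show ((1:Fin 3) = 2) = False by simp [Fin.ext_iff],
      show ((2:Fin 3) = 1) = False by simp [Fin.ext_iff], if_false]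
    ring
  constructor
  · rw [key]; nlinarith [sq_nonneg (a 0 * b 0 + a 1 * b 1 + a 2 * b 2)]
  · rw [key]
    have h : (a 0 * b 0 + a 1 * b 1 + a 2 * b 2)^2 ≤ vnormSq a * vnormSq b := by
      simp only [vnormSq, Fin.sum_univ_three]
      nlinarith [sq_nonneg (a 0 * b 1 - a 1 * b 0), sq_nonneg (a 0 * b 2 - a 2 * b 0),
        sq_nonneg (a 1 * b 2 - a 2 * b 1)]
    nlinarith
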